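/- (Identification of Γ(B_n) with the permutahedron graph via maximal chains.) For n ≥ 1 there exists a bijection e from Equiv.Perm (Fin n) to the set of maximal chains (flags) of the Boolean lattice Finset (Fin n), such that for all σ, τ ∈ Equiv.Perm (Fin n): τ = σ·s_m for some 0 ≤ m ≤ n−2 with τ ≠ σ (where s_m = Equiv.swap m (m+1)) if and only if the flags e(σ) and e(τ) differ in precisely one element, i.e., e(σ) ≠ e(τ) and there is exactly one member of e(σ) not belonging to e(τ). -/

import Mathlib

/-- The adjacent transposition `s_j = (j, j+1)` in the symmetric group on `Fin n`,
indexed by `j : Fin (n-1)`. -/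
def s {n : ℕ} (j : Fin (n - 1)) : Equiv.Perm (Fin n) :=
  Equiv.swap ⟨j.val, by have := j.isLt; omega⟩ ⟨j.val + 1, by have := j.isLt; omega⟩

namespace FlagProof
variable {n : ℕ}

/-- The initial segment of size `k` of permutation `σ`. -/
def seg (σ : Equiv.Perm (Fin n)) (k : ℕ) : Finset (Fin n) :=
  Finset.univ.filter fun i => (σ.symm i : ℕ) < k

lemma mem_seg {σ : Equiv.Perm (Fin n)} {k : ℕ} {i : Fin n} :
    i ∈ seg σ k ↔ (σ.symm i : ℕ) < k := by simp [seg]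

lemma seg_mono {σ : Equiv.Perm (Fin n)} {k l : ℕ} (h : k ≤ l) : seg σ k ⊆ seg σ l :=
  fun i hi => mem_seg.2 (lt_of_lt_of_le (mem_seg.1 hi) h)

lemma seg_zero (σ : Equiv.Perm (Fin n)) : seg σ 0 = ∅ := by
  ext i; simp [mem_seg]

lemma seg_univ (σ : Equiv.Perm (Fin n)) : seg σ n = Finset.univ := by
  ext i; simp [mem_seg, (σ.symm i).isLt]

lemma card_seg (σ : Equiv.Perm (Fin n)) {k : ℕ} (hk : k ≤ n) : (seg σ k).card = k := by
  have himg : seg σ k =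
      Finset.image (fun j : Fin k => σ ⟨j.1, lt_of_lt_of_le j.2 hk⟩) Finset.univ := by
    ext i
    simp only [mem_seg, Finset.mem_image, Finset.mem_univ, true_and]
    constructor
    · intro h; exact ⟨⟨(σ.symm i : ℕ), h⟩, by simp⟩
    · rintro ⟨j, rfl⟩; simp [j.2]
  rw [himg, Finset.card_image_of_injective _ ?_, Finset.card_univ, Fintype.card_fin]
  intro a b hab
  have h2 := σ.injective hab
  exact Fin.ext (by simpa using h2)

lemma seg_sdiff (σ : Equiv.Perm (Fin n)) {k : ℕ} (hk : k < n) :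
    seg σ (k + 1) \ seg σ k = {σ ⟨k, hk⟩} := by
  ext i
  simp only [Finset.mem_sdiff, mem_seg, Finset.mem_singleton]
  constructor
  · rintro ⟨h1, h2⟩
    have : σ.symm i = ⟨k, hk⟩ := Fin.ext (show ((σ.symm i : Fin n) : ℕ) = k by omega)
    rw [← this, Equiv.apply_symm_apply]
  · rintro rfl
    simp

lemma seg_succ (σ : Equiv.Perm (Fin n)) {k : ℕ} (hk : k < n) :
    seg σ (k + 1) = insert (σ ⟨k, hk⟩) (seg σ k) := by
  ext i
  constructor
  · intro h1
    by_cases h2 : i ∈ seg σ k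
    · exact Finset.mem_insert_of_mem h2
    · have h3 : i ∈ seg σ (k + 1) \ seg σ k := Finset.mem_sdiff.2 ⟨h1, h2⟩
      rw [seg_sdiff σ hk] at h3
      exact Finset.mem_insert.2 (Or.inl (Finset.mem_singleton.1 h3))
  · intro h1
    rcases Finset.mem_insert.1 h1 with h2 | h2
    · subst h2
      have h3 : σ ⟨k, hk⟩ ∈ seg σ (k + 1) \ seg σ k := by
        rw [seg_sdiff σ hk]; exact Finset.mem_singleton_self _
      exact (Finset.mem_sdiff.1 h3).1
    · exact seg_mono (Nat.le_succ k) h2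


lemma card_le_n (B : Finset (Fin n)) : B.card ≤ n := by
  simpa using Finset.card_le_univ B

lemma eq_seg_of_comparable {σ : Equiv.Perm (Fin n)} {B : Finset (Fin n)}
    (h : B ≤ seg σ B.card ∨ seg σ B.card ≤ B) : B = seg σ B.card := by
  have hc : B.card ≤ n := card_le_n B
  rcases h with h | h
  · exact Finset.eq_of_subset_of_card_le h (by rw [card_seg σ hc])
  · exact (Finset.eq_of_subset_of_card_le h (by rw [card_seg σ hc])).symm

/-- The flag of initial segments of a permutation. -/
def flagOf (σ : Equiv.Perm (Fin n)) : Flag (Finset (Fin n)) where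
  carrier := {A | ∃ k ≤ n, A = seg σ k}
  Chain' := by
    rintro A ⟨k, hk, rfl⟩ B ⟨l, hl, rfl⟩ _
    rcases le_total k l with h | h
    · exact Or.inl (seg_mono h)
    · exact Or.inr (seg_mono h)
  max_chain' := by
    intro t hchain hsub
    refine Set.Subset.antisymm hsub fun B hB => ?_
    have hc : B.card ≤ n := card_le_n B
    have hmem : seg σ B.card ∈ t := hsub ⟨B.card, hc, rfl⟩
    by_cases hBe : B = seg σ B.card
    · exact ⟨B.card, hc, hBe⟩
    · exact ⟨B.card, hc, eq_seg_of_comparable (hchain hB hmem hBe)⟩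

lemma mem_flagOf {σ : Equiv.Perm (Fin n)} {A : Finset (Fin n)} :
    A ∈ flagOf σ ↔ ∃ k ≤ n, A = seg σ k := Iff.rfl

lemma seg_mem_flagOf (σ : Equiv.Perm (Fin n)) {k : ℕ} (hk : k ≤ n) :
    seg σ k ∈ flagOf σ := ⟨k, hk, rfl⟩

lemma eq_seg_card_of_mem {σ : Equiv.Perm (Fin n)} {A : Finset (Fin n)}
    (h : A ∈ flagOf σ) : A = seg σ A.card := by
  rcases h with ⟨k, hk, rfl⟩
  rw [card_seg σ hk]

lemma apply_eq_of_seg_eq {σ τ : Equiv.Perm (Fin n)}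
    (hseg : ∀ k ≤ n, seg σ k = seg τ k) : σ = τ := by
  apply Equiv.ext
  intro j
  have hj := j.isLt
  have h1 := seg_sdiff σ hj
  have h2 := seg_sdiff τ hj
  rw [hseg (j.1 + 1) hj, hseg j.1 (le_of_lt hj)] at h1
  rw [h2] at h1
  have h3 := Finset.singleton_injective h1
  simpa [Fin.eta] using h3.symm

lemma flagOf_injective : Function.Injective (flagOf (n := n)) := by
  intro σ τ h
  apply apply_eq_of_seg_eq
  intro k hk
  have h1 : seg σ k ∈ flagOf τ := h ▸ seg_mem_flagOf σ hk
  have h2 := eq_seg_card_of_mem h1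
  rwa [card_seg σ hk] at h2


lemma mem_card_unique (F : Flag (Finset (Fin n))) {A B : Finset (Fin n)}
    (hA : A ∈ F) (hB : B ∈ F) (h : A.card = B.card) : A = B := by
  rcases F.le_or_le hA hB with hle | hle
  · exact Finset.eq_of_subset_of_card_le (Finset.le_iff_subset.1 hle) (le_of_eq h.symm)
  · exact (Finset.eq_of_subset_of_card_le (Finset.le_iff_subset.1 hle) (le_of_eq h)).symm

lemma exists_card_mem (F : Flag (Finset (Fin n))) :
    ∀ k, k ≤ n → ∃ A, A ∈ F ∧ A.card = k := by
  intro k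
  induction k with
  | zero =>
    intro _
    refine ⟨⊥, F.bot_mem, ?_⟩
    simp
  | succ k ih =>
    intro hk1
    classical
    obtain ⟨A, hAF, hAcard⟩ := ih (by omega)
    have hAne : A ≠ Finset.univ := by
      intro h
      rw [h, Finset.card_univ, Fintype.card_fin] at hAcard
      omega
    have huniv : (Finset.univ : Finset (Fin n)) ∈ F := by
      simpa [Finset.top_eq_univ] using F.top_mem
    have hAu : A ⊂ Finset.univ := Finset.ssubset_univ_iff.2 hAne
    set S : Finset (Finset (Fin n)) :=
      Finset.univ.filter (fun C => C ∈ F ∧ A ⊂ C) with hS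
    have hSne : S.Nonempty := ⟨Finset.univ, by simp [hS, huniv, hAu]⟩
    obtain ⟨B, hBS, hBmin⟩ : ∃ B ∈ S, ∀ C ∈ S, ¬ C < B := by
      obtain ⟨B, hB⟩ := Finset.exists_minimal hSne
      exact ⟨B, hB.1, fun C hC hlt => hlt.not_ge (hB.2 hC hlt.le)⟩
    rw [hS, Finset.mem_filter] at hBS
    obtain ⟨-, hBF, hAB⟩ := hBS
    obtain ⟨x, hxB, hxA⟩ := Finset.exists_of_ssubset hAB
    have hins : insert x A ∈ F := by
      rw [Flag.mem_iff_forall_le_or_ge]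
      intro C hC
      rcases F.le_or_le hC hAF with hCA | hAC
      · exact Or.inr (Finset.le_iff_subset.2
          ((Finset.le_iff_subset.1 hCA).trans (Finset.subset_insert x A)))
      · by_cases hACeq : A = C
        · exact Or.inr (Finset.le_iff_subset.2 (hACeq ▸ Finset.subset_insert x A))
        · have hACss : A ⊂ C := lt_of_le_of_ne hAC hACeq
          have hBC : B ⊆ C := by
            rcases F.le_or_le hC hBF with hCB | hBC
            · by_cases hCBeq : C = B
              · exact le_of_eq hCBeq.symm
              · exact absurd (lt_of_le_of_ne hCB hCBeq)
                  (hBmin C (by simp [hS, hC, hACss]))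
            · exact hBC
          refine Or.inl (Finset.le_iff_subset.2 (Finset.insert_subset ?_ ?_))
          · exact hBC hxB
          · exact hACss.subset
    have hiA : A ⊂ insert x A := Finset.ssubset_insert hxA
    have hiB : insert x A ⊆ B := Finset.insert_subset hxB hAB.subset
    have hBeq : B = insert x A := by
      by_contra hne
      exact hBmin (insert x A) (by simp [hS, hins, hiA])
        (lt_of_le_of_ne hiB (fun h => hne h.symm))
    refine ⟨B, hBF, ?_⟩
    rw [hBeq, Finset.card_insert_of_notMem hxA, hAcard]

lemma flagOf_surjective (hn : 1 ≤ n) : Function.Surjective (flagOf (n := n)) := by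
  intro F
  choose! A hmem hcard using exists_card_mem F
  have hsub : ∀ k l, k ≤ l → l ≤ n → A k ⊆ A l := by
    intro k l hkl hl
    have h1 := hmem k (le_trans hkl hl)
    have h2 := hmem l hl
    rcases F.le_or_le h1 h2 with h | h
    · exact Finset.le_iff_subset.1 h
    · have := Finset.eq_of_subset_of_card_le (Finset.le_iff_subset.1 h)
        (by rw [hcard k (le_trans hkl hl), hcard l hl]; exact hkl)
      intro x hx
      rwa [this]
  have hone : ∀ j : Fin n, ∃ x : Fin n, A (j.1 + 1) \ A j.1 = {x} := by
    intro j
    have hj := j.isLt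
    rw [← Finset.card_eq_one, Finset.card_sdiff_of_subset (hsub j.1 (j.1 + 1) (Nat.le_succ _) hj),
      hcard (j.1 + 1) hj, hcard j.1 (le_of_lt hj)]
    omega
  choose f hf using hone
  have finj : Function.Injective f := by
    have key : ∀ i j : Fin n, i < j → f i ≠ f j := by
      intro i j hij hne
      have h1 : f i ∈ A (i.1 + 1) := by
        have := hf i
        have : f i ∈ A (i.1 + 1) \ A i.1 := by rw [this]; exact Finset.mem_singleton_self _
        exact (Finset.mem_sdiff.1 this).1
      have h2 : f j ∉ A j.1 := by
        have h3 : f j ∈ A (j.1 + 1) \ A j.1 := by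
          rw [hf j]; exact Finset.mem_singleton_self _
        exact (Finset.mem_sdiff.1 h3).2
      exact h2 (hne ▸ hsub (i.1 + 1) j.1 hij (le_of_lt j.isLt) h1)
    intro i j hne
    rcases lt_trichotomy i j with h | h | h
    · exact absurd hne (key i j h)
    · exact h
    · exact absurd hne.symm (key j i h)
  let σ : Equiv.Perm (Fin n) := Equiv.ofBijective f (Finite.injective_iff_bijective.1 finj)
  have hseg : ∀ k, k ≤ n → seg σ k = A k := by
    intro k
    induction k with
    | zero =>
      intro _
      rw [seg_zero]
      have := hcard 0 (by omega)
      exact (Finset.card_eq_zero.1 this).symm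
    | succ k ih =>
      intro hk1
      have hk : k < n := hk1
      rw [seg_succ σ hk, ih (by omega)]
      have hfk : σ ⟨k, hk⟩ = f ⟨k, hk⟩ := rfl
      rw [hfk]
      have h1 := hf ⟨k, hk⟩
      have h2 : A k ⊆ A (k + 1) := hsub k (k + 1) (Nat.le_succ _) hk1
      have h3 := Finset.sdiff_union_of_subset h2
      rw [show (⟨k, hk⟩ : Fin n).1 = k from rfl] at h1
      rw [← h3, h1, ← Finset.insert_eq]
  refine ⟨σ, ?_⟩
  apply SetLike.ext
  intro B
  constructor
  · rintro ⟨k, hk, rfl⟩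
    rw [hseg k hk]
    exact hmem k hk
  · intro hB
    have hc : B.card ≤ n := card_le_n B
    have : B = A B.card := mem_card_unique F hB (hmem B.card hc) (by rw [hcard B.card hc])
    exact ⟨B.card, hc, by rw [hseg B.card hc]; exact this⟩


lemma s_symm {m : Fin (n - 1)} : (s m).symm = s m := Equiv.symm_swap _ _

lemma mul_s_symm_apply (σ : Equiv.Perm (Fin n)) (m : Fin (n - 1)) (i : Fin n) :
    (σ * s m).symm i = s m (σ.symm i) := by
  rw [show (σ * s m).symm i = (s m).symm (σ.symm i) from rfl, s_symm]

lemma s_apply_val_lt_iff {m : Fin (n - 1)} (j : Fin n) {k : ℕ} (hne : k ≠ m.1 + 1) :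
    ((s m j : Fin n) : ℕ) < k ↔ (j : ℕ) < k := by
  have hm := m.isLt
  rcases eq_or_ne j ⟨m.1, by omega⟩ with hj | hja
  · rw [hj, show s m ⟨m.1, by omega⟩ = ⟨m.1 + 1, by omega⟩ from Equiv.swap_apply_left _ _]
    show m.1 + 1 < k ↔ (⟨m.1, by omega⟩ : Fin n).1 < k
    show m.1 + 1 < k ↔ m.1 < k
    omega
  · rcases eq_or_ne j ⟨m.1 + 1, by omega⟩ with hj | hjb
    · rw [hj, show s m ⟨m.1 + 1, by omega⟩ = ⟨m.1, by omega⟩ from Equiv.swap_apply_right _ _]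
      show m.1 < k ↔ m.1 + 1 < k
      omega
    · rw [show s m j = j from Equiv.swap_apply_of_ne_of_ne hja hjb]

lemma seg_mul (σ : Equiv.Perm (Fin n)) (m : Fin (n - 1)) {k : ℕ} (hne : k ≠ m.1 + 1) :
    seg (σ * s m) k = seg σ k := by
  ext i
  simp only [mem_seg, mul_s_symm_apply]
  exact s_apply_val_lt_iff (σ.symm i) hne

lemma seg_mul_ne (σ : Equiv.Perm (Fin n)) (m : Fin (n - 1)) :
    seg (σ * s m) (m.1 + 1) ≠ seg σ (m.1 + 1) := by
  have hm := m.isLt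
  intro h
  have ha : σ ⟨m.1, by omega⟩ ∈ seg σ (m.1 + 1) := by
    rw [mem_seg, Equiv.symm_apply_apply]
    show m.1 < m.1 + 1
    omega
  have hb : σ ⟨m.1, by omega⟩ ∉ seg (σ * s m) (m.1 + 1) := by
    rw [mem_seg, mul_s_symm_apply, Equiv.symm_apply_apply,
      show s m ⟨m.1, by omega⟩ = ⟨m.1 + 1, by omega⟩ from Equiv.swap_apply_left _ _]
    show ¬ m.1 + 1 < m.1 + 1
    omega
  rw [h] at hb
  exact hb ha

lemma apply_eq_of_local (σ τ : Equiv.Perm (Fin n)) {j : Fin n}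
    (h1 : seg σ j.1 = seg τ j.1) (h2 : seg σ (j.1 + 1) = seg τ (j.1 + 1)) : σ j = τ j := by
  have hs := seg_sdiff σ j.isLt
  have ht := seg_sdiff τ j.isLt
  rw [h1, h2, ht] at hs
  have h3 := Finset.singleton_injective hs
  simpa [Fin.eta] using h3.symm

lemma eq_mul_s {σ τ : Equiv.Perm (Fin n)} {M : ℕ} (hM : M + 2 ≤ n)
    (hne : seg σ (M + 1) ≠ seg τ (M + 1))
    (hseg : ∀ j, j ≤ n → j ≠ M + 1 → seg σ j = seg τ j) :
    τ = σ * s ⟨M, by omega⟩ := by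
  have hM1 : M < n := by omega
  have hM2 : M + 1 < n := by omega
  have hP : seg σ M = seg τ M := hseg M (by omega) (by omega)
  have hQ : seg σ (M + 2) = seg τ (M + 2) := hseg (M + 2) (by omega) (by omega)
  have hQσ : seg σ (M + 2) = insert (σ ⟨M + 1, hM2⟩) (insert (σ ⟨M, hM1⟩) (seg σ M)) := by
    rw [show M + 2 = (M + 1) + 1 from rfl, seg_succ σ hM2, seg_succ σ hM1]
  have hQτ : seg τ (M + 2) = insert (τ ⟨M + 1, hM2⟩) (insert (τ ⟨M, hM1⟩) (seg τ M)) := by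
    rw [show M + 2 = (M + 1) + 1 from rfl, seg_succ τ hM2, seg_succ τ hM1]
  have hkey : insert (σ ⟨M + 1, hM2⟩) (insert (σ ⟨M, hM1⟩) (seg σ M))
      = insert (τ ⟨M + 1, hM2⟩) (insert (τ ⟨M, hM1⟩) (seg σ M)) := by
    rw [← hQσ, hQ, hQτ, hP]
  have hmemP : ∀ (ρ : Equiv.Perm (Fin n)) (l : ℕ) (hl : l < n), M ≤ l → ρ ⟨l, hl⟩ ∉ seg ρ M := by
    intro ρ l hl hMl h
    rw [mem_seg, Equiv.symm_apply_apply] at h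
    exact absurd h (by show ¬ l < M; omega)
  -- τ ⟨M⟩ ∈ {σ ⟨M+1⟩, σ ⟨M⟩}
  have hta : τ ⟨M, hM1⟩ = σ ⟨M + 1, hM2⟩ ∨ τ ⟨M, hM1⟩ = σ ⟨M, hM1⟩ := by
    have h1 : τ ⟨M, hM1⟩ ∈ insert (σ ⟨M + 1, hM2⟩) (insert (σ ⟨M, hM1⟩) (seg σ M)) := by
      rw [hkey]
      exact Finset.mem_insert_of_mem (Finset.mem_insert_self _ _)
    rcases Finset.mem_insert.1 h1 with h2 | h2
    · exact Or.inl h2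
    rcases Finset.mem_insert.1 h2 with h3 | h3
    · exact Or.inr h3
    · rw [hP] at h3
      exact absurd h3 (hmemP τ M hM1 le_rfl)
  have htb : τ ⟨M + 1, hM2⟩ = σ ⟨M + 1, hM2⟩ ∨ τ ⟨M + 1, hM2⟩ = σ ⟨M, hM1⟩ := by
    have h1 : τ ⟨M + 1, hM2⟩ ∈ insert (σ ⟨M + 1, hM2⟩) (insert (σ ⟨M, hM1⟩) (seg σ M)) := by
      rw [hkey]
      exact Finset.mem_insert_self _ _
    rcases Finset.mem_insert.1 h1 with h2 | h2
    · exact Or.inl h2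
    rcases Finset.mem_insert.1 h2 with h3 | h3
    · exact Or.inr h3
    · rw [hP] at h3
      exact absurd h3 (hmemP τ (M + 1) hM2 (by omega))
  have hta' : τ ⟨M, hM1⟩ = σ ⟨M + 1, hM2⟩ := by
    rcases hta with h | h
    · exact h
    · exfalso
      apply hne
      rw [seg_succ σ hM1, seg_succ τ hM1, h, hP]
  have htb' : τ ⟨M + 1, hM2⟩ = σ ⟨M, hM1⟩ := by
    rcases htb with h | h
    · exfalso
      have : τ ⟨M, hM1⟩ = τ ⟨M + 1, hM2⟩ := by rw [hta', h]
      have h4 := τ.injective this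
      have h5 : M = M + 1 := congrArg Fin.val h4
      omega
    · exact h
  apply Equiv.ext
  intro j
  show τ j = σ (s ⟨M, by omega⟩ j)
  rcases eq_or_ne j ⟨M, hM1⟩ with rfl | hja
  · rw [show s (⟨M, by omega⟩ : Fin (n - 1)) ⟨M, hM1⟩ = ⟨M + 1, hM2⟩ from
      Equiv.swap_apply_left _ _]
    exact hta'
  · rcases eq_or_ne j ⟨M + 1, hM2⟩ with rfl | hjb
    · rw [show s (⟨M, by omega⟩ : Fin (n - 1)) ⟨M + 1, hM2⟩ = ⟨M, hM1⟩ from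
        Equiv.swap_apply_right _ _]
      exact htb'
    · rw [show s (⟨M, by omega⟩ : Fin (n - 1)) j = j from
        Equiv.swap_apply_of_ne_of_ne hja hjb]
      have hjM : j.1 ≠ M := fun h => hja (Fin.ext h)
      have hjM1 : j.1 ≠ M + 1 := fun h => hjb (Fin.ext h)
      exact (apply_eq_of_local σ τ
        (hseg j.1 (le_of_lt j.isLt) hjM1)
        (hseg (j.1 + 1) j.isLt (by omega))).symm

end FlagProof

open FlagProof in
/-- identification of `Γ(B_n)` with the graph of maximal chains of the
Boolean lattice: there is a bijection `e` from permutations to flags (maximal chains)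
of `Finset (Fin n)` such that `σ` and `τ` are adjacent in the permutahedron graph iff
the flags `e σ` and `e τ` differ in precisely one element. -/
theorem exists_flag_equiv (n : ℕ) (hn : 1 ≤ n) :
    ∃ e : Equiv.Perm (Fin n) ≃ Flag (Finset (Fin n)),
      ∀ σ τ : Equiv.Perm (Fin n),
        (σ ≠ τ ∧ ∃ m : Fin (n - 1), τ = σ * s m) ↔
          (e σ ≠ e τ ∧ ∃! A : Finset (Fin n), A ∈ e σ ∧ A ∉ e τ) := by
  classical
  have hbij : Function.Bijective (flagOf (n := n)) :=
    ⟨flagOf_injective, flagOf_surjective hn⟩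
  refine ⟨Equiv.ofBijective _ hbij, fun σ τ => ?_⟩
  constructor
  · rintro ⟨hστ, m, rfl⟩
    have hm := m.isLt
    refine ⟨fun h => hστ (flagOf_injective h), ?_⟩
    refine ⟨seg σ (m.1 + 1), ⟨⟨m.1 + 1, by omega, rfl⟩, ?_⟩, ?_⟩
    · intro hin
      obtain ⟨k, hk, hA⟩ := mem_flagOf.1 hin
      have hc1 : (seg σ (m.1 + 1)).card = m.1 + 1 := card_seg σ (by omega)
      have hc2 : (seg (σ * s m) k).card = k := card_seg _ hk
      rw [hA, hc2] at hc1
      rw [hc1] at hA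
      exact seg_mul_ne σ m hA.symm
    · intro A' hA'
      obtain ⟨hA'σ, hA'τ⟩ := hA'
      obtain ⟨k, hk, rfl⟩ := mem_flagOf.1 hA'σ
      by_cases hkm : k = m.1 + 1
      · rw [hkm]
      · exact absurd (mem_flagOf.2 ⟨k, hk, (seg_mul σ m hkm).symm⟩) hA'τ
  · rintro ⟨hne, A, ⟨hAσ, hAτ⟩, huniq⟩
    have hστ : σ ≠ τ := fun h => hne (congrArg _ h)
    obtain ⟨k0, hk0, rfl⟩ := mem_flagOf.1 hAσ
    have hseg : ∀ j, j ≤ n → j ≠ k0 → seg σ j = seg τ j := by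
      intro j hj hjk
      rcases Classical.em (seg σ j ∈ flagOf τ) with hin | hout
      · obtain ⟨l, hl, hEq⟩ := mem_flagOf.1 hin
        have c1 := card_seg σ hj
        have c2 := card_seg τ hl
        rw [hEq, c2] at c1
        rw [c1] at hEq
        exact hEq
      · have h1 : seg σ j = seg σ k0 := huniq (seg σ j) ⟨⟨j, hj, rfl⟩, hout⟩
        have c1 := card_seg σ hj
        have c2 := card_seg σ hk0
        rw [h1, c2] at c1
        omega
    have h0 : k0 ≠ 0 := by
      rintro rfl
      exact hAτ (mem_flagOf.2 ⟨0, by omega, by rw [seg_zero, seg_zero]⟩)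
    have hn' : k0 ≠ n := by
      intro h
      apply hAτ
      refine mem_flagOf.2 ⟨n, le_rfl, ?_⟩
      rw [h, seg_univ, seg_univ]
    have hnek0 : seg σ k0 ≠ seg τ k0 := fun h => hAτ (mem_flagOf.2 ⟨k0, hk0, h⟩)
    have hM : (k0 - 1) + 2 ≤ n := by omega
    refine ⟨hστ, ⟨k0 - 1, by omega⟩, eq_mul_s hM ?_ ?_⟩
    · have hk : k0 - 1 + 1 = k0 := by omega
      rw [hk]
      exact hnek0
    · intro j hj hjne
      exact hseg j hj (by omega)
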